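/- Let T > 0, c₁ > 0, p > 0 and p' ≥ max(1,p). There exists a constant C < ∞, depending only on (p, p', T, c₁), such that the following holds. Let n ≥ 1; for k = 1,…,n let x^k, w^k, β ∈ C([0,T];ℝ^d) with w^k_0 = β_0 = 0, and let g^k : [0,T] → ℝ^d be Borel measurable and integrable, satisfying for all k and all t ∈ [0,T]: x^k_t = x^k_0 + ∫₀ᵗ g^k(s) ds + w^k_t + β_t, and for almost every s ∈ [0,T] and all k: |g^k(s)| ≤ c₁ ( 1 + |x^k_s| + ( (1/n) Σ_{j=1}^n |x^j_s|^p )^{1/max(1,p)} ). Then (1/n) Σ_{k=1}^n ‖x^k‖_T^{p'} ≤ C ( 1 + (1/n) Σ_{k=1}^n |x^k_0|^{p'} + (1/n) Σ_{k=1}^n ‖w^k‖_T^{p'} + ‖β‖_T^{p'} ). -/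

import Mathlib

open MeasureTheory Set

noncomputable section

/-- Truncated supremum norm `‖x‖_t = sup_{s ∈ [0,t]} |x_s|` of a path `x : ℝ → ℝ^d`. -/
def pathSup {d : ℕ} (x : ℝ → EuclideanSpace ℝ (Fin d)) (t : ℝ) : ℝ :=
  ⨆ s : Icc (0 : ℝ) t, ‖x s.1‖

lemma pathSup_nonneg {d : ℕ} (x : ℝ → EuclideanSpace ℝ (Fin d)) (t : ℝ) :
    0 ≤ pathSup x t :=
  Real.iSup_nonneg fun s => norm_nonneg _

lemma le_pathSup {d : ℕ} {x : ℝ → EuclideanSpace ℝ (Fin d)} (hx : Continuous x)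
    {t s : ℝ} (hs : s ∈ Icc (0:ℝ) t) : ‖x s‖ ≤ pathSup x t := by
  have hbdd : BddAbove (Set.range fun s : Icc (0:ℝ) t => ‖x s.1‖) := by
    have : (Set.range fun s : Icc (0:ℝ) t => ‖x s.1‖) = (fun u => ‖x u‖) '' Icc 0 t := by
      ext y
      simp [Set.mem_image, Set.mem_range, Subtype.exists]

    rw [this]
    exact (isCompact_Icc.image (hx.norm)).bddAbove
  exact le_ciSup hbdd (⟨s, hs⟩ : Icc (0:ℝ) t)

lemma pathSup_le {d : ℕ} {x : ℝ → EuclideanSpace ℝ (Fin d)} {t M : ℝ} (ht : 0 ≤ t)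
    (h : ∀ s ∈ Icc (0:ℝ) t, ‖x s‖ ≤ M) : pathSup x t ≤ M := by
  haveI : Nonempty (Icc (0:ℝ) t) := ⟨⟨0, le_refl _, ht⟩⟩
  exact ciSup_le fun s => h s.1 s.2


lemma two_rpow_helper {a b q : ℝ} (ha : 0 ≤ a) (hb : 0 ≤ b) (hq : 0 ≤ q) :
    (a + b) ^ q ≤ 2 ^ q * (a ^ q + b ^ q) := by
  have h1 : a + b ≤ 2 * max a b := by rcases max_cases a b with ⟨h,h'⟩|⟨h,h'⟩ <;> simp [h] <;> linarith
  have h2 : (max a b)^q ≤ a^q + b^q := by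
    rcases max_cases a b with ⟨h,_⟩|⟨h,_⟩ <;> rw [h]
    · nlinarith [Real.rpow_nonneg hb q]
    · nlinarith [Real.rpow_nonneg ha q]
  calc (a+b)^q ≤ (2 * max a b)^q := Real.rpow_le_rpow (by linarith) h1 hq
    _ = 2^q * (max a b)^q := Real.mul_rpow (by norm_num) (le_max_of_le_left ha)
    _ ≤ 2^q * (a^q + b^q) := by
        have : (0:ℝ) < 2^q := Real.rpow_pos_of_pos (by norm_num) q
        nlinarith


lemma one_le_two_rpow {q : ℝ} (hq : 0 ≤ q) : (1:ℝ) ≤ 2 ^ q := by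
  calc (1:ℝ) = 1 ^ q := (Real.one_rpow q).symm
    _ ≤ 2 ^ q := Real.rpow_le_rpow one_pos.le one_le_two hq

lemma jensen_rpow {h : ℝ → ℝ} (hc : Continuous h) (hpos : ∀ s, 0 ≤ h s) {q t : ℝ}
    (hq : 1 ≤ q) (ht : 0 < t) :
    (∫ s in (0:ℝ)..t, h s) ^ q ≤ t ^ (q - 1) * ∫ s in (0:ℝ)..t, h s ^ q := by
  set μ := volume.restrict (Icc (0:ℝ) t) with hμ
  haveI : IsFiniteMeasure μ := by
    constructor
    rw [hμ, Measure.restrict_apply_univ, Real.volume_Icc]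
    exact ENNReal.ofReal_lt_top
  haveI : NeZero μ := by
    constructor
    intro h0
    have h1 : μ Set.univ = 0 := by rw [h0]; rfl
    rw [hμ, Measure.restrict_apply_univ, Real.volume_Icc] at h1
    simp [ENNReal.ofReal_eq_zero] at h1
    linarith
  have hconv : ConvexOn ℝ (Ici 0) fun y : ℝ => y ^ q := convexOn_rpow hq
  have hcont : ContinuousOn (fun y : ℝ => y ^ q) (Ici 0) := fun y _ =>
    (Real.continuousAt_rpow_const y q (Or.inr (by linarith))).continuousWithinAt
  have hcq : Continuous (fun s => h s ^ q) :=
    hc.rpow_const (fun s => Or.inr (by linarith))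
  have hint : Integrable h μ := hc.integrableOn_Icc
  have hintq : Integrable ((fun y : ℝ => y ^ q) ∘ h) μ := hcq.integrableOn_Icc
  have hmem : ∀ᵐ s ∂μ, h s ∈ Ici (0:ℝ) := Filter.Eventually.of_forall fun s => hpos s
  have hjen := hconv.map_average_le hcont isClosed_Ici hmem hint hintq
  have hvol : (μ Set.univ).toReal = t := by
    rw [hμ, Measure.restrict_apply_univ, Real.volume_Icc, ENNReal.toReal_ofReal (by linarith), sub_zero]
  rw [average_eq, average_eq, measureReal_def, hvol] at hjen
  have hI : ∫ s, h s ∂μ = ∫ s in (0:ℝ)..t, h s := by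
    rw [hμ, intervalIntegral.integral_of_le ht.le, ← integral_Icc_eq_integral_Ioc]
  have hJ : ∫ s, h s ^ q ∂μ = ∫ s in (0:ℝ)..t, h s ^ q := by
    rw [hμ, intervalIntegral.integral_of_le ht.le, ← integral_Icc_eq_integral_Ioc]
  rw [hI, hJ] at hjen
  set I := ∫ s in (0:ℝ)..t, h s with hIdef
  set J := ∫ s in (0:ℝ)..t, h s ^ q with hJdef
  have hInonneg : 0 ≤ I :=
    intervalIntegral.integral_nonneg ht.le (fun s _ => hpos s)
  have hjen2 : (t⁻¹ * I) ^ q ≤ t⁻¹ * J := by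
    simpa [smul_eq_mul] using hjen
  have hexp : (t⁻¹ * I) ^ q = t⁻¹ ^ q * I ^ q :=
    Real.mul_rpow (by positivity) hInonneg
  rw [hexp] at hjen2
  have htq : (0:ℝ) < t ^ q := Real.rpow_pos_of_pos ht q
  have hinvq : t⁻¹ ^ q = (t ^ q)⁻¹ := Real.inv_rpow ht.le q
  rw [hinvq] at hjen2
  have hkey : I ^ q ≤ t ^ q * t⁻¹ * J := by
    have h2 := mul_le_mul_of_nonneg_left hjen2 htq.le
    rw [← mul_assoc] at h2
    rw [mul_inv_cancel₀ htq.ne', one_mul] at h2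
    linarith [h2, mul_assoc (t^q) t⁻¹ J]
  calc I ^ q ≤ t ^ q * t⁻¹ * J := hkey
    _ = t ^ (q - 1) * J := by
        congr 1
        rw [← Real.rpow_neg_one t, ← Real.rpow_add ht]; ring_nf


lemma rpow_le_one_add_self {y p : ℝ} (hy : 0 ≤ y) (hp0 : 0 < p) (hp1 : p ≤ 1) :
    y ^ p ≤ 1 + y := by
  rcases le_or_gt y 1 with h | h
  · have := Real.rpow_le_one hy h hp0.le
    linarith
  · have h1 : y ^ p ≤ y ^ (1:ℝ) := Real.rpow_le_rpow_of_exponent_le h.le hp1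
    rw [Real.rpow_one] at h1
    linarith

lemma mean_term_bound {n : ℕ} (hn : 1 ≤ n) (a : Fin n → ℝ) (ha : ∀ j, 0 ≤ a j)
    {p q : ℝ} (hp : 0 < p) (hq : max 1 p ≤ q) :
    (((1 / (n:ℝ)) * ∑ j, a j ^ p) ^ (1 / max 1 p)) ^ q
      ≤ 1 + (1 / (n:ℝ)) * ∑ j, a j ^ q := by
  have hn0 : (0:ℝ) < n := by exact_mod_cast hn
  have hq1 : 1 ≤ q := le_trans (le_max_left _ _) hq
  have hθ : 0 ≤ (1 / (n:ℝ)) * ∑ j, a j ^ p := by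
    apply mul_nonneg (by positivity)
    exact Finset.sum_nonneg fun j _ => Real.rpow_nonneg (ha j) p
  have hw : ∀ j ∈ (Finset.univ : Finset (Fin n)), (0:ℝ) ≤ 1 / (n:ℝ) := fun _ _ => by positivity
  have hw' : ∑ _j ∈ (Finset.univ : Finset (Fin n)), (1 / (n:ℝ)) = 1 := by
    simp [Finset.sum_const, Finset.card_univ]
    field_simp
  have hmulsum : ∀ b : Fin n → ℝ, (1 / (n:ℝ)) * ∑ j, b j = ∑ j, (1 / (n:ℝ)) * b j := by
    intro b; rw [Finset.mul_sum]
  have hpowmul : (((1 / (n:ℝ)) * ∑ j, a j ^ p) ^ (1 / max 1 p)) ^ q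
      = ((1 / (n:ℝ)) * ∑ j, a j ^ p) ^ (q / max 1 p) := by
    rw [← Real.rpow_mul hθ]; ring_nf
  rw [hpowmul]
  rcases le_or_gt 1 p with h1p | h1p
  · -- p ≥ 1, max 1 p = p
    rw [max_eq_right h1p]
    have hqp : 1 ≤ q / p := (one_le_div hp).mpr (le_trans (le_max_right 1 p) hq)
    have key := Real.rpow_arith_mean_le_arith_mean_rpow Finset.univ (fun _ => 1 / (n:ℝ))
      (fun j => a j ^ p) hw hw' (fun j _ => Real.rpow_nonneg (ha j) p) hqp
    rw [← hmulsum] at key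
    have heq : ∀ j, (a j ^ p) ^ (q / p) = a j ^ q := by
      intro j
      rw [← Real.rpow_mul (ha j)]
      congr 1
      field_simp
    calc ((1 / (n:ℝ)) * ∑ j, a j ^ p) ^ (q / p)
        ≤ ∑ j, (1 / (n:ℝ)) * (a j ^ p) ^ (q / p) := key
      _ = (1 / (n:ℝ)) * ∑ j, a j ^ q := by
          rw [hmulsum]
          exact Finset.sum_congr rfl fun j _ => by rw [heq j]
      _ ≤ 1 + (1 / (n:ℝ)) * ∑ j, a j ^ q := by
          have : 0 ≤ (1 / (n:ℝ)) * ∑ j, a j ^ q := by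
            apply mul_nonneg (by positivity)
            exact Finset.sum_nonneg fun j _ => Real.rpow_nonneg (ha j) q
          linarith
  · -- p < 1, max 1 p = 1
    rw [max_eq_left h1p.le, div_one]
    have key := Real.rpow_arith_mean_le_arith_mean_rpow Finset.univ (fun _ => 1 / (n:ℝ))
      (fun j => a j ^ p) hw hw' (fun j _ => Real.rpow_nonneg (ha j) p) hq1
    rw [← hmulsum] at key
    have heq : ∀ j, (a j ^ p) ^ q ≤ 1 + a j ^ q := by
      intro j
      have h1 : (a j ^ p) ^ q = (a j ^ q) ^ p := by
        rw [← Real.rpow_mul (ha j), ← Real.rpow_mul (ha j)]; ring_nf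
      rw [h1]
      exact rpow_le_one_add_self (Real.rpow_nonneg (ha j) q) hp h1p.le
    calc ((1 / (n:ℝ)) * ∑ j, a j ^ p) ^ q
        ≤ ∑ j, (1 / (n:ℝ)) * (a j ^ p) ^ q := key
      _ ≤ ∑ j, (1 / (n:ℝ)) * (1 + a j ^ q) := by
          apply Finset.sum_le_sum
          intro j _
          exact mul_le_mul_of_nonneg_left (heq j) (by positivity)
      _ = 1 + (1 / (n:ℝ)) * ∑ j, a j ^ q := by
          simp_rw [mul_add]
          rw [Finset.sum_add_distrib, ← hmulsum, ← hmulsum]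
          congr 1
          simp [Finset.sum_const, Finset.card_univ]
          field_simp


lemma gronwall_int {ψ : ℝ → ℝ} (hψ : Continuous ψ) (hψ0 : ∀ s, 0 ≤ ψ s) {A B T : ℝ}
    (hB : 0 < B) (hT : 0 < T) (hA : 0 ≤ A)
    (h : ∀ t ∈ Icc (0:ℝ) T, ψ t ≤ A + B * ∫ s in (0:ℝ)..t, ψ s) :
    ∀ t ∈ Icc (0:ℝ) T, ψ t ≤ A * Real.exp (B * T) := by
  set F : ℝ → ℝ := fun u => ∫ s in (0:ℝ)..u, ψ s with hF
  have hderiv : ∀ u : ℝ, HasDerivAt F (ψ u) u := by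
    intro u
    exact intervalIntegral.integral_hasDerivAt_right
      (hψ.intervalIntegrable 0 u)
      (hψ.stronglyMeasurableAtFilter _ _)
      hψ.continuousAt
  have hFcont : ContinuousOn F (Icc 0 T) :=
    fun u _ => ((hderiv u).continuousAt).continuousWithinAt
  have hFnonneg : ∀ u ∈ Icc (0:ℝ) T, 0 ≤ F u := fun u hu =>
    intervalIntegral.integral_nonneg hu.1 fun s _ => hψ0 s
  have key := norm_le_gronwallBound_of_norm_deriv_right_le (f := F) (f' := ψ)
    (δ := 0) (K := B) (ε := A) (a := 0) (b := T) hFcont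
    (fun u _ => (hderiv u).hasDerivWithinAt)
    (by simp [hF])
    (by
      intro u hu
      have hu' : u ∈ Icc (0:ℝ) T := ⟨hu.1, hu.2.le⟩
      rw [Real.norm_of_nonneg (hψ0 u), Real.norm_of_nonneg (hFnonneg u hu')]
      have := h u hu'
      linarith)
  intro t ht
  have hFt : ‖F t‖ ≤ gronwallBound 0 B A (t - 0) := key t ht
  rw [Real.norm_of_nonneg (hFnonneg t ht), sub_zero,
    gronwallBound_of_K_ne_0 hB.ne'] at hFt
  have hexp : Real.exp (B * t) ≤ Real.exp (B * T) := by
    apply Real.exp_le_exp.mpr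
    exact mul_le_mul_of_nonneg_left ht.2 hB.le
  have h2 := h t ht
  have : A + B * F t ≤ A * Real.exp (B * t) := by
    have hBt : B * (A / B * (Real.exp (B * t) - 1)) = A * (Real.exp (B * t) - 1) := by
      field_simp
    calc A + B * F t ≤ A + B * (0 * Real.exp (B * t) + A / B * (Real.exp (B * t) - 1)) := by
          have := mul_le_mul_of_nonneg_left hFt hB.le
          linarith
      _ = A * Real.exp (B * t) := by rw [zero_mul, zero_add, hBt]; ring
  calc ψ t ≤ A + B * F t := h2
    _ ≤ A * Real.exp (B * t) := this
    _ ≤ A * Real.exp (B * T) := by nlinarith [Real.exp_pos (B*t)]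


set_option maxHeartbeats 2000000 in
/-- Pathwise Gronwall-type estimate for interacting particle systems: averaged bound. -/
theorem particle_system_averaged_estimate
    (T c₁ p p' : ℝ) (hT : 0 < T) (hc₁ : 0 < c₁) (hp : 0 < p) (hp' : max 1 p ≤ p') :
    ∃ C : ℝ, ∀ (d : ℕ) (n : ℕ), 1 ≤ n →
      ∀ (x w : Fin n → ℝ → EuclideanSpace ℝ (Fin d)) (β : ℝ → EuclideanSpace ℝ (Fin d))
        (g : Fin n → ℝ → EuclideanSpace ℝ (Fin d)),
      (∀ k, Continuous (x k)) → (∀ k, Continuous (w k)) → Continuous β →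
      (∀ k, w k 0 = 0) → β 0 = 0 →
      (∀ k, IntervalIntegrable (g k) volume 0 T) →
      (∀ k, ∀ t ∈ Icc (0 : ℝ) T,
        x k t = x k 0 + (∫ s in (0 : ℝ)..t, g k s) + w k t + β t) →
      (∀ᵐ s ∂(volume.restrict (Icc (0 : ℝ) T)), ∀ k,
        ‖g k s‖ ≤ c₁ * (1 + ‖x k s‖
          + ((1 / (n : ℝ)) * ∑ j : Fin n, ‖x j s‖ ^ p) ^ (1 / max 1 p))) →
      (1 / (n : ℝ)) * ∑ k : Fin n, pathSup (x k) T ^ p' ≤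
        C * (1 + (1 / (n : ℝ)) * ∑ k : Fin n, ‖x k 0‖ ^ p'
          + (1 / (n : ℝ)) * ∑ k : Fin n, pathSup (w k) T ^ p'
          + pathSup β T ^ p') := by
  set q := p' with hqdef
  have hq1 : (1:ℝ) ≤ q := le_trans (le_max_left _ _) hp'
  have hq0 : (0:ℝ) < q := lt_of_lt_of_le one_pos hq1
  -- constants
  set c₄ : ℝ := 2 ^ q * T ^ (q - 1) * c₁ ^ q * 4 ^ q with hc₄
  have hc₄pos : 0 < c₄ := by
    apply mul_pos (mul_pos (mul_pos ?_ ?_) ?_) ?_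
    · exact Real.rpow_pos_of_pos two_pos q
    · exact Real.rpow_pos_of_pos hT _
    · exact Real.rpow_pos_of_pos hc₁ q
    · exact Real.rpow_pos_of_pos four_pos q
  set B : ℝ := 2 * c₄ with hB
  have hBpos : 0 < B := by positivity
  set a₀ : ℝ := 2 ^ q * 2 ^ q * 2 ^ q + 2 * c₄ * T + 2 ^ q with ha₀
  have ha₀pos : 0 < a₀ := by
    have h1 : (0:ℝ) < 2 ^ q := Real.rpow_pos_of_pos two_pos q
    nlinarith
  refine ⟨a₀ * (1 + B * T * Real.exp (B * T)), ?_⟩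
  intro d n hn x w β g hx hw hβ hw0 hβ0 hgint heq hae
  have hn0 : (0:ℝ) < n := by exact_mod_cast hn
  set m := max 1 p with hm
  -- basic objects
  set θ : ℝ → ℝ := fun s => (1 / (n:ℝ)) * ∑ j : Fin n, ‖x j s‖ ^ p with hθ
  set h : Fin n → ℝ → ℝ := fun k s => c₁ * (1 + ‖x k s‖ + θ s ^ (1 / m)) with hh
  set ψ : ℝ → ℝ := fun s => (1 / (n:ℝ)) * ∑ j : Fin n, ‖x j s‖ ^ q with hψ
  have hθcont : Continuous θ := by
    apply Continuous.mul continuous_const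
    apply continuous_finset_sum
    intro j _
    exact ((hx j).norm).rpow_const (fun s => Or.inr hp.le)
  have hθnonneg : ∀ s, 0 ≤ θ s := by
    intro s
    apply mul_nonneg (by positivity)
    exact Finset.sum_nonneg fun j _ => Real.rpow_nonneg (norm_nonneg _) p
  have hhcont : ∀ k, Continuous (h k) := by
    intro k
    apply Continuous.mul continuous_const
    exact (continuous_const.add (hx k).norm).add
      (hθcont.rpow_const (fun s => Or.inr (by positivity)))
  have hhnonneg : ∀ k s, 0 ≤ h k s := by
    intro k s
    apply mul_nonneg hc₁.le
    have := Real.rpow_nonneg (hθnonneg s) (1 / m)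
    have := norm_nonneg (x k s)
    linarith
  have hψcont : Continuous ψ := by
    apply Continuous.mul continuous_const
    apply continuous_finset_sum
    intro j _
    exact ((hx j).norm).rpow_const (fun s => Or.inr hq0.le)
  have hψnonneg : ∀ s, 0 ≤ ψ s := by
    intro s
    apply mul_nonneg (by positivity)
    exact Finset.sum_nonneg fun j _ => Real.rpow_nonneg (norm_nonneg _) q
  -- data constants
  set W : Fin n → ℝ := fun k => pathSup (w k) T with hW
  set Bβ : ℝ := pathSup β T with hBβ
  set R : Fin n → ℝ := fun k => ‖x k 0‖ + (W k + Bβ) with hR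
  have hWnonneg : ∀ k, 0 ≤ W k := fun k => pathSup_nonneg _ _
  have hBβnonneg : 0 ≤ Bβ := pathSup_nonneg _ _
  have hRnonneg : ∀ k, 0 ≤ R k := by
    intro k
    have := hWnonneg k
    have := norm_nonneg (x k 0)
    simp only [hR]
    linarith
  -- Step F4: pointwise bound on ‖x k s‖
  have hxs : ∀ k, ∀ t ∈ Icc (0:ℝ) T, ∀ s ∈ Icc (0:ℝ) t,
      ‖x k s‖ ≤ R k + ∫ u in (0:ℝ)..t, h k u := by
    intro k t ht s hs
    have hsT : s ∈ Icc (0:ℝ) T := ⟨hs.1, le_trans hs.2 ht.2⟩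
    have hxeq := heq k s hsT
    have hgs : IntervalIntegrable (fun u => ‖g k u‖) volume 0 s :=
      ((hgint k).norm).mono_set (by
        rw [Set.uIcc_of_le hsT.1, Set.uIcc_of_le hT.le]
        exact Set.Icc_subset_Icc le_rfl hsT.2)
    have h1 : ‖∫ u in (0:ℝ)..s, g k u‖ ≤ ∫ u in (0:ℝ)..s, ‖g k u‖ :=
      intervalIntegral.norm_integral_le_integral_norm hs.1
    have h2 : ∫ u in (0:ℝ)..s, ‖g k u‖ ≤ ∫ u in (0:ℝ)..s, h k u := by
      apply intervalIntegral.integral_mono_ae_restrict hs.1 hgs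
        ((hhcont k).intervalIntegrable 0 s)
      have h3 := ae_restrict_of_ae_restrict_of_subset
        (Set.Icc_subset_Icc le_rfl hsT.2) hae
      filter_upwards [h3] with u hu
      exact hu k
    have h4 : ∫ u in (0:ℝ)..s, h k u ≤ ∫ u in (0:ℝ)..t, h k u := by
      apply intervalIntegral.integral_mono_interval le_rfl hs.1 hs.2
      · filter_upwards with u using hhnonneg k u
      · exact (hhcont k).intervalIntegrable 0 t
    have h5 : ‖w k s‖ ≤ W k := le_pathSup (hw k) hsT
    have h6 : ‖β s‖ ≤ Bβ := le_pathSup hβ hsT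
    calc ‖x k s‖ = ‖x k 0 + (∫ u in (0:ℝ)..s, g k u) + w k s + β s‖ := by rw [← hxeq]
      _ ≤ ‖x k 0‖ + ‖∫ u in (0:ℝ)..s, g k u‖ + ‖w k s‖ + ‖β s‖ := by
          apply le_trans (norm_add_le _ _)
          have := norm_add_le (x k 0 + (∫ u in (0:ℝ)..s, g k u)) (w k s)
          have := norm_add_le (x k 0) (∫ u in (0:ℝ)..s, g k u)
          linarith
      _ ≤ R k + ∫ u in (0:ℝ)..t, h k u := by
          simp only [hR]
          linarith
  -- Step F5: pathSup bound
  have hps : ∀ k, ∀ t ∈ Icc (0:ℝ) T,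
      pathSup (x k) t ≤ R k + ∫ u in (0:ℝ)..t, h k u :=
    fun k t ht => pathSup_le ht.1 (hxs k t ht)
  -- pointwise bound on h^q
  have hhq : ∀ k s, h k s ^ q ≤ c₁ ^ q * 4 ^ q * (2 + ‖x k s‖ ^ q + ψ s) := by
    intro k s
    have hxn : (0:ℝ) ≤ ‖x k s‖ := norm_nonneg _
    have hθ' : (0:ℝ) ≤ θ s ^ (1 / m) := Real.rpow_nonneg (hθnonneg s) _
    have step1 : h k s ^ q = c₁ ^ q * (1 + ‖x k s‖ + θ s ^ (1 / m)) ^ q := by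
      rw [hh]
      exact Real.mul_rpow hc₁.le (by linarith)
    have step2 : (1 + ‖x k s‖ + θ s ^ (1 / m)) ^ q
        ≤ 2 ^ q * (1 + 2 ^ q * (‖x k s‖ ^ q + (θ s ^ (1 / m)) ^ q)) := by
      have t1 : (1 + (‖x k s‖ + θ s ^ (1 / m))) ^ q
          ≤ 2 ^ q * ((1:ℝ) ^ q + (‖x k s‖ + θ s ^ (1 / m)) ^ q) :=
        two_rpow_helper one_pos.le (by linarith) hq0.le
      have t2 : (‖x k s‖ + θ s ^ (1 / m)) ^ q ≤ 2 ^ q * (‖x k s‖ ^ q + (θ s ^ (1 / m)) ^ q) :=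
        two_rpow_helper hxn hθ' hq0.le
      rw [Real.one_rpow] at t1
      have h2q : (0:ℝ) < 2 ^ q := Real.rpow_pos_of_pos two_pos q
      calc (1 + ‖x k s‖ + θ s ^ (1 / m)) ^ q
          = (1 + (‖x k s‖ + θ s ^ (1 / m))) ^ q := by ring_nf
        _ ≤ 2 ^ q * (1 + (‖x k s‖ + θ s ^ (1 / m)) ^ q) := t1
        _ ≤ 2 ^ q * (1 + 2 ^ q * (‖x k s‖ ^ q + (θ s ^ (1 / m)) ^ q)) := by nlinarith
    have step3 : (θ s ^ (1 / m)) ^ q ≤ 1 + ψ s := by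
      have := mean_term_bound hn (fun j => ‖x j s‖) (fun j => norm_nonneg _) hp hp'
      simpa [hθ, hψ, hm] using this
    have h2q : (0:ℝ) < 2 ^ q := Real.rpow_pos_of_pos two_pos q
    have h4q : (2:ℝ) ^ q * 2 ^ q = 4 ^ q := by
      rw [← Real.mul_rpow two_pos.le two_pos.le]
      norm_num
    have hc₁q : (0:ℝ) < c₁ ^ q := Real.rpow_pos_of_pos hc₁ q
    have hxq : (0:ℝ) ≤ ‖x k s‖ ^ q := Real.rpow_nonneg hxn q
    have h1 : (1:ℝ) ≤ 2 ^ q := one_le_two_rpow hq0.le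
    have inner : 1 + 2 ^ q * (‖x k s‖ ^ q + (θ s ^ (1 / m)) ^ q)
        ≤ 2 ^ q * (1 + ‖x k s‖ ^ q + (1 + ψ s)) := by
      have i1 : 2 ^ q * (‖x k s‖ ^ q + (θ s ^ (1 / m)) ^ q)
          ≤ 2 ^ q * (‖x k s‖ ^ q + (1 + ψ s)) :=
        mul_le_mul_of_nonneg_left (by linarith [step3]) h2q.le
      have i2 : 2 ^ q * (1 + ‖x k s‖ ^ q + (1 + ψ s))
          = 2 ^ q * 1 + 2 ^ q * (‖x k s‖ ^ q + (1 + ψ s)) := by ring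
      rw [i2]
      have : (1:ℝ) ≤ 2 ^ q * 1 := by linarith
      linarith
    calc h k s ^ q = c₁ ^ q * (1 + ‖x k s‖ + θ s ^ (1 / m)) ^ q := step1
      _ ≤ c₁ ^ q * (2 ^ q * (1 + 2 ^ q * (‖x k s‖ ^ q + (θ s ^ (1 / m)) ^ q))) :=
          mul_le_mul_of_nonneg_left step2 hc₁q.le
      _ ≤ c₁ ^ q * (2 ^ q * (2 ^ q * (1 + ‖x k s‖ ^ q + (1 + ψ s)))) :=
          mul_le_mul_of_nonneg_left
            (mul_le_mul_of_nonneg_left inner h2q.le) hc₁q.le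
      _ = c₁ ^ q * 4 ^ q * (2 + ‖x k s‖ ^ q + ψ s) := by
          rw [← h4q]; ring
  -- Master inequality: φ(t) ≤ A + B ∫ψ  where we only state what we need
  set Rbar : ℝ := (1 / (n:ℝ)) * ∑ k : Fin n, R k ^ q with hRbar
  have hRbarnonneg : 0 ≤ Rbar := by
    apply mul_nonneg (by positivity)
    exact Finset.sum_nonneg fun k _ => Real.rpow_nonneg (hRnonneg k) q
  set A : ℝ := 2 ^ q * Rbar + 2 * c₄ * T with hA
  have hAnonneg : 0 ≤ A := by
    have h2q : (0:ℝ) < 2 ^ q := Real.rpow_pos_of_pos two_pos q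
    nlinarith [hc₄pos, hT]
  set c₅ : ℝ := 2 ^ q * T ^ (q - 1) * (c₁ ^ q * 4 ^ q) with hc₅
  have hc₅pos : 0 < c₅ := by
    have h2q : (0:ℝ) < 2 ^ q := Real.rpow_pos_of_pos two_pos q
    have hTq : (0:ℝ) < T ^ (q-1) := Real.rpow_pos_of_pos hT _
    have hc₁q : (0:ℝ) < c₁ ^ q := Real.rpow_pos_of_pos hc₁ q
    have h4q : (0:ℝ) < 4 ^ q := Real.rpow_pos_of_pos four_pos q
    rw [hc₅]; positivity
  have master : ∀ t ∈ Icc (0:ℝ) T,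
      (1 / (n:ℝ)) * ∑ k : Fin n, pathSup (x k) t ^ q ≤ A + B * ∫ s in (0:ℝ)..t, ψ s := by
    intro t ht
    -- bound each k
    have hHq : ∀ k : Fin n, (∫ u in (0:ℝ)..t, h k u) ^ q
        ≤ T ^ (q - 1) * ∫ u in (0:ℝ)..t, h k u ^ q := by
      intro k
      rcases eq_or_lt_of_le ht.1 with h0 | h0
      · rw [← h0]
        simp [intervalIntegral.integral_same, Real.zero_rpow hq0.ne']
      · have hj := jensen_rpow (hhcont k) (hhnonneg k) hq1 h0
        have hmono : t ^ (q-1) ≤ T ^ (q-1) :=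
          Real.rpow_le_rpow h0.le ht.2 (by linarith)
        have hint : (0:ℝ) ≤ ∫ u in (0:ℝ)..t, h k u ^ q :=
          intervalIntegral.integral_nonneg ht.1
            (fun u _ => Real.rpow_nonneg (hhnonneg k u) q)
        calc (∫ u in (0:ℝ)..t, h k u) ^ q ≤ t ^ (q-1) * ∫ u in (0:ℝ)..t, h k u ^ q := hj
          _ ≤ T ^ (q-1) * ∫ u in (0:ℝ)..t, h k u ^ q := by nlinarith
    -- integral of h^q
    have hintq : ∀ k : Fin n, ∫ u in (0:ℝ)..t, h k u ^ q
        ≤ c₁ ^ q * 4 ^ q * ∫ u in (0:ℝ)..t, (2 + ‖x k u‖ ^ q + ψ u) := by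
      intro k
      rw [← intervalIntegral.integral_const_mul]
      apply intervalIntegral.integral_mono_on ht.1
        (((hhcont k).rpow_const (fun s => Or.inr hq0.le)).intervalIntegrable 0 t)
        ((continuous_const.mul
          ((continuous_const.add ((hx k).norm.rpow_const (fun s => Or.inr hq0.le))).add
            hψcont)).intervalIntegrable 0 t)
      intro u _
      exact hhq k u
    -- each pathSup^q
    have hkq : ∀ k : Fin n, pathSup (x k) t ^ q
        ≤ 2 ^ q * R k ^ q + c₅ * ∫ u in (0:ℝ)..t, (2 + ‖x k u‖ ^ q + ψ u) := by
      intro k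
      have hps' := hps k t ht
      have hH : (0:ℝ) ≤ ∫ u in (0:ℝ)..t, h k u :=
        intervalIntegral.integral_nonneg ht.1 (fun u _ => hhnonneg k u)
      have hpsnn : 0 ≤ pathSup (x k) t := pathSup_nonneg _ _
      have t1 : pathSup (x k) t ^ q ≤ (R k + ∫ u in (0:ℝ)..t, h k u) ^ q :=
        Real.rpow_le_rpow hpsnn hps' hq0.le
      have t2 : (R k + ∫ u in (0:ℝ)..t, h k u) ^ q
          ≤ 2 ^ q * (R k ^ q + (∫ u in (0:ℝ)..t, h k u) ^ q) :=
        two_rpow_helper (hRnonneg k) hH hq0.le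
      have t3 := hHq k
      have t4 := hintq k
      have h2q : (0:ℝ) < 2 ^ q := Real.rpow_pos_of_pos two_pos q
      have hTq : (0:ℝ) < T ^ (q-1) := Real.rpow_pos_of_pos hT _
      calc pathSup (x k) t ^ q
          ≤ 2 ^ q * (R k ^ q + (∫ u in (0:ℝ)..t, h k u) ^ q) := t1.trans t2
        _ ≤ 2 ^ q * (R k ^ q + T ^ (q-1) * ∫ u in (0:ℝ)..t, h k u ^ q) :=
            mul_le_mul_of_nonneg_left (by linarith) h2q.le
        _ ≤ 2 ^ q * (R k ^ q + T ^ (q-1) * (c₁ ^ q * 4 ^ q *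
              ∫ u in (0:ℝ)..t, (2 + ‖x k u‖ ^ q + ψ u))) := by
            apply mul_le_mul_of_nonneg_left _ h2q.le
            have := mul_le_mul_of_nonneg_left t4 hTq.le
            linarith
        _ = 2 ^ q * R k ^ q + c₅ * ∫ u in (0:ℝ)..t, (2 + ‖x k u‖ ^ q + ψ u) := by
            rw [hc₅]; ring
    -- average over k
    have havg : (1 / (n:ℝ)) * ∑ k : Fin n, pathSup (x k) t ^ q
        ≤ 2 ^ q * Rbar + c₅ *
            ((1 / (n:ℝ)) * ∑ k : Fin n, ∫ u in (0:ℝ)..t, (2 + ‖x k u‖ ^ q + ψ u)) := by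
      have hsum := Finset.sum_le_sum (fun k (_ : k ∈ Finset.univ) => hkq k)
      have hmul := mul_le_mul_of_nonneg_left hsum
        (le_of_lt (by positivity : (0:ℝ) < 1 / (n:ℝ)))
      have he1 : ∑ k : Fin n, (2 ^ q * R k ^ q
            + c₅ * ∫ u in (0:ℝ)..t, (2 + ‖x k u‖ ^ q + ψ u))
          = 2 ^ q * (∑ k : Fin n, R k ^ q)
            + c₅ * ∑ k : Fin n, ∫ u in (0:ℝ)..t, (2 + ‖x k u‖ ^ q + ψ u) := by
        rw [Finset.sum_add_distrib, ← Finset.mul_sum, ← Finset.mul_sum]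
      rw [he1] at hmul
      calc (1 / (n:ℝ)) * ∑ k : Fin n, pathSup (x k) t ^ q
          ≤ (1 / (n:ℝ)) * (2 ^ q * (∑ k : Fin n, R k ^ q)
            + c₅ * ∑ k : Fin n, ∫ u in (0:ℝ)..t, (2 + ‖x k u‖ ^ q + ψ u)) := hmul
        _ = 2 ^ q * Rbar + c₅ *
            ((1 / (n:ℝ)) * ∑ k : Fin n, ∫ u in (0:ℝ)..t, (2 + ‖x k u‖ ^ q + ψ u)) := by
            rw [hRbar]; ring
    -- compute the averaged integral
    have hswap : (1 / (n:ℝ)) * ∑ k : Fin n, ∫ u in (0:ℝ)..t, (2 + ‖x k u‖ ^ q + ψ u)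
        = ∫ u in (0:ℝ)..t, (2 + ψ u + ψ u) := by
      rw [← intervalIntegral.integral_finset_sum]
      · rw [← intervalIntegral.integral_const_mul]
        apply intervalIntegral.integral_congr
        intro u _
        show (1 / (n:ℝ)) * ∑ k : Fin n, (2 + ‖x k u‖ ^ q + ψ u) = 2 + ψ u + ψ u
        have hsum2 : ∑ k : Fin n, (2 + ‖x k u‖ ^ q + ψ u)
            = (n:ℝ) * 2 + (∑ k : Fin n, ‖x k u‖ ^ q) + (n:ℝ) * ψ u := by
          rw [Finset.sum_add_distrib, Finset.sum_add_distrib]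
          simp [Finset.sum_const, Finset.card_univ, nsmul_eq_mul]
        have hS : (∑ k : Fin n, ‖x k u‖ ^ q) = (n:ℝ) * ψ u := by
          simp only [hψ]
          field_simp
        rw [hsum2, hS]
        field_simp
      · intro k _
        exact ((continuous_const.add ((hx k).norm.rpow_const (fun s => Or.inr hq0.le))).add
          hψcont).intervalIntegrable 0 t
    have hintψ : (0:ℝ) ≤ ∫ u in (0:ℝ)..t, ψ u :=
      intervalIntegral.integral_nonneg ht.1 (fun u _ => hψnonneg u)
    have hsplit : ∫ u in (0:ℝ)..t, (2 + ψ u + ψ u)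
        = 2 * t + 2 * ∫ u in (0:ℝ)..t, ψ u := by
      have e1 : ∀ u, (2:ℝ) + ψ u + ψ u = 2 + 2 * ψ u := by intro u; ring
      rw [intervalIntegral.integral_congr (fun u _ => e1 u)]
      rw [intervalIntegral.integral_add (intervalIntegrable_const)
        ((hψcont.intervalIntegrable 0 t).const_mul 2)]
      rw [intervalIntegral.integral_const_mul]
      simp
      ring
    rw [hswap, hsplit] at havg
    have hc₁q : (0:ℝ) < c₁ ^ q := Real.rpow_pos_of_pos hc₁ q
    have h2q : (0:ℝ) < 2 ^ q := Real.rpow_pos_of_pos two_pos q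
    have h4q : (0:ℝ) < 4 ^ q := Real.rpow_pos_of_pos four_pos q
    have hTq : (0:ℝ) < T ^ (q-1) := Real.rpow_pos_of_pos hT _
    have hc₅c₄ : c₅ = c₄ := by rw [hc₅, hc₄]; ring
    have hfinal : c₅ * (2 * t + 2 * ∫ u in (0:ℝ)..t, ψ u)
        ≤ 2 * c₄ * T + B * ∫ u in (0:ℝ)..t, ψ u := by
      rw [hc₅c₄, hB]
      have htT : t ≤ T := ht.2
      nlinarith [hintψ, ht.1, hc₄pos]
    calc (1 / (n:ℝ)) * ∑ k : Fin n, pathSup (x k) t ^ q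
        ≤ 2 ^ q * Rbar + c₅ * (2 * t + 2 * ∫ u in (0:ℝ)..t, ψ u) := havg
      _ ≤ A + B * ∫ u in (0:ℝ)..t, ψ u := by rw [hA]; linarith
  -- ψ ≤ φ pointwise hence ψ satisfies the integral inequality
  have hψle : ∀ t ∈ Icc (0:ℝ) T, ψ t ≤ A + B * ∫ s in (0:ℝ)..t, ψ s := by
    intro t ht
    have h1 : ψ t ≤ (1 / (n:ℝ)) * ∑ k : Fin n, pathSup (x k) t ^ q := by
      apply mul_le_mul_of_nonneg_left _ (le_of_lt (by positivity : (0:ℝ) < 1 / (n:ℝ)))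
      apply Finset.sum_le_sum
      intro k _
      exact Real.rpow_le_rpow (norm_nonneg _) (le_pathSup (hx k) ⟨ht.1, le_rfl⟩) hq0.le
    exact le_trans h1 (master t ht)
  have hgron := gronwall_int hψcont hψnonneg hBpos hT hAnonneg hψle
  -- integral of ψ over [0,T]
  have hintT : ∫ s in (0:ℝ)..T, ψ s ≤ T * (A * Real.exp (B * T)) := by
    calc ∫ s in (0:ℝ)..T, ψ s ≤ ∫ _s in (0:ℝ)..T, A * Real.exp (B * T) := by
          apply intervalIntegral.integral_mono_on hT.le (hψcont.intervalIntegrable 0 T)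
            intervalIntegrable_const
          intro u hu
          exact hgron u hu
      _ = T * (A * Real.exp (B * T)) := by
          rw [intervalIntegral.integral_const, smul_eq_mul, sub_zero]
  have hφT := master T ⟨hT.le, le_rfl⟩
  have hφT2 : (1 / (n:ℝ)) * ∑ k : Fin n, pathSup (x k) T ^ q
      ≤ A * (1 + B * T * Real.exp (B * T)) := by
    calc (1 / (n:ℝ)) * ∑ k : Fin n, pathSup (x k) T ^ q
        ≤ A + B * ∫ s in (0:ℝ)..T, ψ s := hφT
      _ ≤ A + B * (T * (A * Real.exp (B * T))) := by
          linarith [mul_le_mul_of_nonneg_left hintT hBpos.le]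
      _ = A * (1 + B * T * Real.exp (B * T)) := by ring
  -- bound A by data
  set D : ℝ := (1 / (n:ℝ)) * ∑ k : Fin n, ‖x k 0‖ ^ q
      + (1 / (n:ℝ)) * ∑ k : Fin n, W k ^ q + Bβ ^ q with hD
  have hDnonneg : 0 ≤ D := by
    have h1 : (0:ℝ) ≤ (1 / (n:ℝ)) * ∑ k : Fin n, ‖x k 0‖ ^ q := by
      apply mul_nonneg (by positivity)
      exact Finset.sum_nonneg fun k _ => Real.rpow_nonneg (norm_nonneg _) q
    have h2 : (0:ℝ) ≤ (1 / (n:ℝ)) * ∑ k : Fin n, W k ^ q := by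
      apply mul_nonneg (by positivity)
      exact Finset.sum_nonneg fun k _ => Real.rpow_nonneg (hWnonneg k) q
    have h3 : (0:ℝ) ≤ Bβ ^ q := Real.rpow_nonneg hBβnonneg q
    rw [hD]; linarith
  have hRk : ∀ k : Fin n, R k ^ q ≤ 2 ^ q * ‖x k 0‖ ^ q
      + 2 ^ q * 2 ^ q * (W k ^ q + Bβ ^ q) := by
    intro k
    have t1 : R k ^ q ≤ 2 ^ q * (‖x k 0‖ ^ q + (W k + Bβ) ^ q) :=
      two_rpow_helper (norm_nonneg _) (add_nonneg (hWnonneg k) hBβnonneg) hq0.le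
    have t2 : (W k + Bβ) ^ q ≤ 2 ^ q * (W k ^ q + Bβ ^ q) :=
      two_rpow_helper (hWnonneg k) hBβnonneg hq0.le
    have h2q : (0:ℝ) < 2 ^ q := Real.rpow_pos_of_pos two_pos q
    calc R k ^ q ≤ 2 ^ q * (‖x k 0‖ ^ q + (W k + Bβ) ^ q) := t1
      _ ≤ 2 ^ q * (‖x k 0‖ ^ q + 2 ^ q * (W k ^ q + Bβ ^ q)) :=
          mul_le_mul_of_nonneg_left (by linarith) h2q.le
      _ = 2 ^ q * ‖x k 0‖ ^ q + 2 ^ q * 2 ^ q * (W k ^ q + Bβ ^ q) := by ring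
  have hRbarle : Rbar ≤ 2 ^ q * 2 ^ q * D := by
    have hsum := Finset.sum_le_sum (fun k (_ : k ∈ Finset.univ) => hRk k)
    have := mul_le_mul_of_nonneg_left hsum (le_of_lt (by positivity : (0:ℝ) < 1 / (n:ℝ)))
    rw [hRbar]
    have h2q : (0:ℝ) < 2 ^ q := Real.rpow_pos_of_pos two_pos q
    have h1 : (1:ℝ) ≤ 2 ^ q := one_le_two_rpow hq0.le
    calc (1 / (n:ℝ)) * ∑ k : Fin n, R k ^ q
        ≤ (1 / (n:ℝ)) * ∑ k : Fin n,
            (2 ^ q * ‖x k 0‖ ^ q + 2 ^ q * 2 ^ q * (W k ^ q + Bβ ^ q)) := this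
      _ = 2 ^ q * ((1 / (n:ℝ)) * ∑ k : Fin n, ‖x k 0‖ ^ q)
          + 2 ^ q * 2 ^ q * ((1 / (n:ℝ)) * ∑ k : Fin n, W k ^ q)
          + 2 ^ q * 2 ^ q * Bβ ^ q := by
            rw [Finset.sum_add_distrib]
            simp_rw [mul_add, Finset.sum_add_distrib]
            rw [← Finset.mul_sum, ← Finset.mul_sum]
            simp [Finset.sum_const, Finset.card_univ, mul_add]
            field_simp
            ring
      _ ≤ 2 ^ q * 2 ^ q * D := by
          rw [hD]
          have h1' : (0:ℝ) ≤ (1 / (n:ℝ)) * ∑ k : Fin n, ‖x k 0‖ ^ q := by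
            apply mul_nonneg (by positivity)
            exact Finset.sum_nonneg fun k _ => Real.rpow_nonneg (norm_nonneg _) q
          have hkey : (2:ℝ) ^ q ≤ 2 ^ q * 2 ^ q := by
            calc (2:ℝ) ^ q = 2 ^ q * 1 := by ring
              _ ≤ 2 ^ q * 2 ^ q := mul_le_mul_of_nonneg_left h1 h2q.le
          nlinarith [mul_le_mul_of_nonneg_right hkey h1']
  have hAle : A ≤ a₀ * (1 + D) := by
    rw [hA, ha₀]
    have h2q : (0:ℝ) < 2 ^ q := Real.rpow_pos_of_pos two_pos q
    have hint1 : 2 ^ q * Rbar ≤ 2 ^ q * (2 ^ q * 2 ^ q * D) :=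
      mul_le_mul_of_nonneg_left hRbarle h2q.le
    nlinarith [hint1, hDnonneg, hc₄pos, hT,
      mul_nonneg (mul_nonneg hc₄pos.le hT.le) hDnonneg,
      mul_nonneg h2q.le hDnonneg]
  -- final
  have hexp : (0:ℝ) < Real.exp (B * T) := Real.exp_pos _
  have hfactor : (0:ℝ) ≤ 1 + B * T * Real.exp (B * T) := by
    have := mul_nonneg (mul_nonneg hBpos.le hT.le) hexp.le
    linarith
  calc (1 / (n:ℝ)) * ∑ k : Fin n, pathSup (x k) T ^ q
      ≤ A * (1 + B * T * Real.exp (B * T)) := hφT2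
    _ ≤ a₀ * (1 + D) * (1 + B * T * Real.exp (B * T)) :=
        mul_le_mul_of_nonneg_right hAle hfactor
    _ = a₀ * (1 + B * T * Real.exp (B * T)) * (1 + D) := by ring
    _ = a₀ * (1 + B * T * Real.exp (B * T))
        * (1 + (1 / (n:ℝ)) * ∑ k : Fin n, ‖x k 0‖ ^ q
          + (1 / (n:ℝ)) * ∑ k : Fin n, pathSup (w k) T ^ q + pathSup β T ^ q) := by
        rw [hD]
        simp only [hW, hBβ]
        ring

end
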